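/- arXiv:2010.08610 — 4 statements merged into one kernel-verified Lean document; each statement's English description precedes it below -/
import Mathlib

section
/- Fix (α, β) ∈ ℂ² with |α|² + |β|² = 1. For every w in the unit disk 𝔻, the function k_w^{α,β}(z) = (α + βz)·conj(α + βw) + z²·conj(w)²/(1 − z·conj(w)) belongs to H²_{α,β}, and for every f ∈ H²_{α,β} one has ⟨f, k_w^{α,β}⟩ = f(w). In particular, H²_{α,β} is a reproducing kernel Hilbert space with kernel k^{α,β}(z,w) = k_w^{α,β}(z), and ‖k_0^{α,β}‖² = |α|². -/
open Complex

noncomputable section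

/-- A coefficient sequence represents an element of the Hardy space `H²(𝔻)`
(analytic functions `z ↦ ∑ aₙ zⁿ` with square-summable coefficients). -/
def MemHardy2 (a : ℕ → ℂ) : Prop := Summable fun n => ‖a n‖ ^ 2

/-- A coefficient sequence represents an element of the constrained Hardy space
`H²_{α,β} = {f ∈ H²(𝔻) : β f(0) = α f'(0)}`; for `f(z) = ∑ aₙ zⁿ` one has
`f(0) = a 0` and `f'(0) = a 1`. -/
def MemH2ab (α β : ℂ) (a : ℕ → ℂ) : Prop := MemHardy2 a ∧ β * a 0 = α * a 1

/-- The `H²(𝔻)` inner product `⟨f, g⟩ = ∑ aₙ conj bₙ` of the functions with coefficient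
sequences `a` and `b`. -/
def hardyInner (a b : ℕ → ℂ) : ℂ := ∑' n, a n * (starRingEnd ℂ) (b n)

/-- **Reproducing kernel for `H²_{α,β}`.**  Fix `(α,β)` with `|α|² + |β|² = 1` and `w` in
the unit disk.  The function `k_w^{α,β}(z) = (α+βz)·conj(α+βw) + z²·conj(w)²/(1 - z·conj w)`
belongs to `H²_{α,β}` (i.e. its coefficient sequence `b` is square-summable and satisfies
`β b 0 = α b 1`), it reproduces: `⟨f, k_w^{α,β}⟩ = f(w)` for all `f ∈ H²_{α,β}`, and at
`w = 0` one has `‖k_0^{α,β}‖² = |α|²`. -/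
theorem reproducing_kernel_H2ab (α β : ℂ)
    (hαβ : ‖α‖ ^ 2 + ‖β‖ ^ 2 = 1)
    (w : ℂ) (hw : ‖w‖ < 1) :
    ∃ b : ℕ → ℂ,
      MemH2ab α β b ∧
      (∀ z : ℂ, ‖z‖ < 1 →
        ∑' n, b n * z ^ n =
          (α + β * z) * (starRingEnd ℂ) (α + β * w)
            + z ^ 2 * ((starRingEnd ℂ) w) ^ 2 / (1 - z * (starRingEnd ℂ) w)) ∧
      (∀ a : ℕ → ℂ, MemH2ab α β a → hardyInner a b = ∑' n, a n * w ^ n) ∧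
      (w = 0 → hardyInner b b = ((‖α‖ : ℝ) : ℂ) ^ 2) := by
  classical
  set C : ℂ := (starRingEnd ℂ) (α + β * w) with hC
  set b : ℕ → ℂ := fun n => if n = 0 then α * C else if n = 1 then β * C
      else ((starRingEnd ℂ) w) ^ n with hb
  have hαβc : (starRingEnd ℂ) α * α + (starRingEnd ℂ) β * β = 1 := by
    have h1 : α * (starRingEnd ℂ) α = ((‖α‖ ^ 2 : ℝ) : ℂ) := by
      rw [Complex.mul_conj, Complex.normSq_eq_norm_sq]
    have h2 : β * (starRingEnd ℂ) β = ((‖β‖ ^ 2 : ℝ) : ℂ) := by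
      rw [Complex.mul_conj, Complex.normSq_eq_norm_sq]
    rw [mul_comm ((starRingEnd ℂ) α), mul_comm ((starRingEnd ℂ) β), h1, h2]
    exact_mod_cast hαβ
  have habw : ‖(starRingEnd ℂ) w‖ < 1 := by rwa [Complex.norm_conj]
  have hmem : MemH2ab α β b := by
    constructor
    · -- square summable
      rw [MemHardy2, ← summable_nat_add_iff 2]
      have hgeom : Summable fun n : ℕ => (‖w‖ ^ 2) ^ 2 * (‖w‖ ^ 2) ^ n := by
        apply Summable.mul_left
        apply summable_geometric_of_lt_one (by positivity)
        nlinarith [norm_nonneg w]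
      refine hgeom.congr fun n => ?_
      have : b (n + 2) = ((starRingEnd ℂ) w) ^ (n + 2) := by simp [hb]
      rw [this, norm_pow, Complex.norm_conj]
      ring
    · simp only [hb]; norm_num; ring
  have hsumf : ∀ z : ℂ, ‖z‖ < 1 →
      ∑' n, b n * z ^ n =
        (α + β * z) * (starRingEnd ℂ) (α + β * w)
          + z ^ 2 * ((starRingEnd ℂ) w) ^ 2 / (1 - z * (starRingEnd ℂ) w) := by
      intro z hz
      have hq : ‖z * (starRingEnd ℂ) w‖ < 1 := by
        rw [norm_mul]
        calc ‖z‖ * ‖(starRingEnd ℂ) w‖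
            ≤ 1 * ‖(starRingEnd ℂ) w‖ := by
              apply mul_le_mul_of_nonneg_right hz.le (norm_nonneg _)
          _ < 1 := by simpa using habw
      have hq' : (1 : ℂ) - z * (starRingEnd ℂ) w ≠ 0 := by
        intro h
        have : z * (starRingEnd ℂ) w = 1 := by linear_combination -h
        rw [this] at hq; simp at hq
      set d : ℕ → ℂ := fun n => if n = 0 then b 0 - 1
          else if n = 1 then b 1 * z - z * (starRingEnd ℂ) w else 0 with hd
      have hdecomp : ∀ n, b n * z ^ n = (z * (starRingEnd ℂ) w) ^ n + d n := by
        intro n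
        match n with
        | 0 => simp [hd]
        | 1 => simp [hd]
        | (k+2) => simp [hb, hd]; ring
      have hgs : Summable fun n : ℕ => (z * (starRingEnd ℂ) w) ^ n := by
        apply summable_geometric_of_norm_lt_one
        exact hq
      have hds : Summable d := by
        apply summable_of_ne_finset_zero (s := {0, 1})
        intro n hn
        simp only [Finset.mem_insert, Finset.mem_singleton, not_or] at hn
        simp [hd, hn.1, hn.2]
      calc ∑' n, b n * z ^ n
          = ∑' n, ((z * (starRingEnd ℂ) w) ^ n + d n) := by
            exact tsum_congr hdecomp
        _ = (∑' n, (z * (starRingEnd ℂ) w) ^ n) + ∑' n, d n := Summable.tsum_add hgs hds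
        _ = (1 - z * (starRingEnd ℂ) w)⁻¹ + (d 0 + d 1) := by
            rw [tsum_geometric_of_norm_lt_one (by exact hq)]
            congr 1
            rw [tsum_eq_sum (s := {0, 1}) (by
              intro n hn
              simp only [Finset.mem_insert, Finset.mem_singleton, not_or] at hn
              simp [hd, hn.1, hn.2])]
            simp
        _ = (α + β * z) * C + z ^ 2 * ((starRingEnd ℂ) w) ^ 2 / (1 - z * (starRingEnd ℂ) w) := by
            simp only [hd, hb, if_pos rfl, if_neg one_ne_zero, ↓reduceIte]
            field_simp
            ring
  have hrep : ∀ a : ℕ → ℂ, MemH2ab α β a → hardyInner a b = ∑' n, a n * w ^ n := by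
      intro a ha
      obtain ⟨hasum, hab⟩ := ha
      have hsumaw : Summable fun n : ℕ => a n * w ^ n := by
        apply Summable.of_norm
        have hbound : Summable fun n : ℕ =>
            (‖a n‖ ^ 2 + (‖w‖ ^ 2) ^ n) / 2 := by
          apply Summable.div_const
          exact hasum.add (summable_geometric_of_lt_one (by positivity)
            (by nlinarith [norm_nonneg w]))
        apply Summable.of_nonneg_of_le (fun n => norm_nonneg _) _ hbound
        intro n
        rw [norm_mul, norm_pow]
        have h1 : (‖w‖ ^ n) ^ 2 = (‖w‖ ^ 2) ^ n := by ring
        nlinarith [sq_nonneg (‖a n‖ - ‖w‖ ^ n)]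
      set e : ℕ → ℂ := fun n => if n = 0 then a 0 * ((starRingEnd ℂ) (b 0) - 1)
          else if n = 1 then a 1 * ((starRingEnd ℂ) (b 1) - w) else 0 with he
      have hdecomp : ∀ n, a n * (starRingEnd ℂ) (b n) = a n * w ^ n + e n := by
        intro n
        match n with
        | 0 => simp [he]; ring
        | 1 => simp [he]; ring
        | (k+2) => simp [hb, he, map_pow]
      have hes : Summable e := by
        apply summable_of_ne_finset_zero (s := {0, 1})
        intro n hn
        simp only [Finset.mem_insert, Finset.mem_singleton, not_or] at hn
        simp [he, hn.1, hn.2]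
      have he01 : e 0 + e 1 = 0 := by
        have hb0 : (starRingEnd ℂ) (b 0) = (starRingEnd ℂ) α * (α + β * w) := by
          simp [hb, hC]
        have hb1 : (starRingEnd ℂ) (b 1) = (starRingEnd ℂ) β * (α + β * w) := by
          simp [hb, hC]
        have e0 : e 0 = a 0 * ((starRingEnd ℂ) (b 0) - 1) := by norm_num [he]
        have e1 : e 1 = a 1 * ((starRingEnd ℂ) (b 1) - w) := by norm_num [he]
        rw [e0, e1, hb0, hb1]
        linear_combination ((starRingEnd ℂ) α * w - (starRingEnd ℂ) β) * hab
          + (a 0 + a 1 * w) * hαβc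
      calc hardyInner a b = ∑' n, (a n * w ^ n + e n) := tsum_congr hdecomp
        _ = (∑' n, a n * w ^ n) + ∑' n, e n := Summable.tsum_add hsumaw hes
        _ = ∑' n, a n * w ^ n := by
            have hte : ∑' n, e n = e 0 + e 1 := by
              rw [tsum_eq_sum (s := {0, 1}) (by
                intro n hn
                simp only [Finset.mem_insert, Finset.mem_singleton, not_or] at hn
                simp [he, hn.1, hn.2])]
              exact Finset.sum_pair (by norm_num : (0:ℕ) ≠ 1)
            rw [hte, he01, add_zero]
  refine ⟨b, hmem, hsumf, hrep, ?_⟩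
  intro hw0
  subst hw0
  rw [hrep b hmem, tsum_eq_single 0 (fun n hn => by simp [zero_pow hn])]
  have hb00 : b 0 = α * (starRingEnd ℂ) α := by simp [hb, hC]
  rw [pow_zero, mul_one, hb00, Complex.mul_conj, Complex.normSq_eq_norm_sq]
  push_cast
  ring
end
end

section
/- Fix (α, β) ∈ ℂ² with |α|² + |β|² = 1. If f is a bounded analytic function on the unit disk 𝔻 with f′(0) = 0 (i.e. f belongs to the Neil algebra 𝔄) and g ∈ H²_{α,β}, then the product fg belongs to H²_{α,β}. In particular, each space H²_{α,β} carries a representation of the Neil algebra 𝔄 by multiplication operators. -/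
set_option maxHeartbeats 1000000


open Complex

noncomputable section

open MeasureTheory Finset Filter
open scoped Topology

namespace NeilAux

local notation "μ₁" => (AddCircle.haarAddCircle : MeasureTheory.Measure (AddCircle (1:ℝ)))

lemma norm_fourier (m : ℤ) (t : AddCircle (1:ℝ)) : ‖(fourier m t : ℂ)‖ = 1 := by
  rw [fourier_apply]
  exact Circle.norm_coe _

/-- Squares of an absolutely summable sequence are summable. -/
lemma sq_summable (u : ℕ → ℂ) (hu : Summable fun k => ‖u k‖) :
    Summable fun k => ‖u k‖ ^ 2 := by
  refine Summable.of_nonneg_of_le (fun k => sq_nonneg _) (fun k => ?_)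
    (hu.mul_left (∑' j, ‖u j‖))
  have h1 : ‖u k‖ ≤ ∑' j, ‖u j‖ := Summable.le_tsum hu k fun j _ => norm_nonneg _
  calc ‖u k‖ ^ 2 = ‖u k‖ * ‖u k‖ := sq (‖u k‖)
    _ ≤ (∑' j, ‖u j‖) * ‖u k‖ := mul_le_mul_of_nonneg_right h1 (norm_nonneg _)

lemma integral_fourier (m : ℤ) :
    (∫ t : AddCircle (1:ℝ), fourier m t ∂μ₁) = if m = 0 then 1 else 0 := by
  split_ifs with h
  · subst h
    have h0 : (fun t : AddCircle (1:ℝ) => (fourier 0 t : ℂ)) = fun _ => 1 :=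
      funext fun t => fourier_zero
    rw [h0, integral_const]
    simp [measure_univ]
  · exact integral_eq_zero_of_add_right_eq_neg fun x =>
      fourier_add_half_inv_index h one_pos x

lemma cont_F (u : ℕ → ℂ) (hu : Summable fun k => ‖u k‖) :
    Continuous (fun t : AddCircle (1:ℝ) => ∑' k : ℕ, u k * fourier (k:ℤ) t) := by
  refine continuous_tsum (fun k => continuous_const.mul (map_continuous _)) hu fun k t => ?_
  rw [norm_mul, norm_fourier, mul_one]

lemma fourierCoeff_tsum (u : ℕ → ℂ) (hu : Summable fun k => ‖u k‖) (n : ℤ) :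
    fourierCoeff (fun t : AddCircle (1:ℝ) => ∑' k : ℕ, u k * fourier (k:ℤ) t) n
      = if 0 ≤ n then u n.toNat else 0 := by
  rw [fourierCoeff]
  have h1 : ∀ t : AddCircle (1:ℝ),
      (fourier (-n) t : ℂ) • ∑' k : ℕ, u k * fourier (k:ℤ) t
        = ∑' k : ℕ, u k * fourier (-n + k) t := by
    intro t
    rw [smul_eq_mul, ← tsum_mul_left]
    congr 1; funext k
    rw [fourier_add]; ring
  simp_rw [h1]
  rw [MeasureTheory.integral_tsum (f := fun k t => u k * fourier (-n + (k:ℤ)) t)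
    (fun k : ℕ => (continuous_const.mul
      (map_continuous (fourier (-n + (k:ℤ))))).aestronglyMeasurable) ?_]
  · have h2 : ∀ k : ℕ, (∫ t : AddCircle (1:ℝ), u k * fourier (-n + k) t ∂μ₁)
        = u k * (if (-n + k : ℤ) = 0 then 1 else 0) := by
      intro k
      rw [MeasureTheory.integral_const_mul, integral_fourier]
    simp_rw [h2]
    by_cases hn : 0 ≤ n
    · rw [if_pos hn]
      rw [tsum_eq_single n.toNat ?_]
      · rw [if_pos (by omega), mul_one]
      · intro k hk
        rw [if_neg (by omega), mul_zero]
    · rw [if_neg hn]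
      have : ∀ k : ℕ, u k * (if (-n + k : ℤ) = 0 then (1:ℂ) else 0) = 0 := by
        intro k
        rw [if_neg (by omega), mul_zero]
      simp_rw [this]
      exact tsum_zero
  · have h3 : ∀ k : ℕ, (∫⁻ t : AddCircle (1:ℝ), ‖u k * fourier (-n + k) t‖₊ ∂μ₁)
        = (‖u k‖₊ : ENNReal) := by
      intro k
      have : ∀ t : AddCircle (1:ℝ), (‖u k * fourier (-n + k) t‖₊ : ENNReal) = ‖u k‖₊ := by
        intro t
        have : ‖u k * fourier (-n + k) t‖ = ‖u k‖ := by
          rw [norm_mul, norm_fourier, mul_one]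
        rw [show ‖u k * fourier (-n + k) t‖₊ = ‖u k‖₊ from NNReal.eq this]
      simp_rw [this]
      simp [measure_univ]
    simp_rw [enorm_eq_nnnorm, h3]
    rw [ENNReal.tsum_coe_ne_top_iff_summable]
    exact NNReal.summable_coe.mp (by simpa [coe_nnnorm] using hu)

lemma cont_integrable {g : AddCircle (1:ℝ) → ℝ} (hg : Continuous g) :
    Integrable g μ₁ := by
  have h1 : IntegrableOn g Set.univ μ₁ :=
    hg.continuousOn.integrableOn_compact isCompact_univ
  rwa [integrableOn_univ] at h1

lemma parseval_nat (u : ℕ → ℂ) (hu : Summable fun k => ‖u k‖) :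
    ∑' k : ℕ, ‖u k‖ ^ 2
      = ∫ t : AddCircle (1:ℝ), ‖∑' k : ℕ, u k * fourier (k:ℤ) t‖ ^ 2 ∂μ₁ := by
  set F : AddCircle (1:ℝ) → ℂ := fun t => ∑' k : ℕ, u k * fourier (k:ℤ) t with hFdef
  have hF : Continuous F := cont_F u hu
  have hbd : ∀ t, ‖F t‖ ≤ ∑' j, ‖u j‖ := by
    intro t
    have he : (fun k => ‖u k * fourier (k:ℤ) t‖) = fun k => ‖u k‖ := by
      funext k; rw [norm_mul, norm_fourier, mul_one]
    calc ‖F t‖ ≤ ∑' k, ‖u k * fourier (k:ℤ) t‖ :=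
          norm_tsum_le_tsum_norm (by rw [he]; exact hu)
      _ = ∑' j, ‖u j‖ := by rw [he]
  have hmem : MemLp F 2 μ₁ :=
    (memLp_top_of_bound hF.aestronglyMeasurable _ (Filter.Eventually.of_forall hbd)).mono_exponent
      le_top
  set Fl : Lp ℂ 2 μ₁ := hmem.toLp F with hFl
  have hae : (Fl : AddCircle (1:ℝ) → ℂ) =ᵐ[μ₁] F := hmem.coeFn_toLp
  have hP := tsum_sq_fourierCoeff Fl
  have hcoeff : ∀ i : ℤ, fourierCoeff (Fl : AddCircle (1:ℝ) → ℂ) i = fourierCoeff F i := by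
    intro i
    unfold fourierCoeff
    refine integral_congr_ae ?_
    filter_upwards [hae] with t ht
    rw [ht]
  have hint : (∫ t : AddCircle (1:ℝ), ‖(Fl : AddCircle (1:ℝ) → ℂ) t‖ ^ 2 ∂μ₁)
      = ∫ t : AddCircle (1:ℝ), ‖F t‖ ^ 2 ∂μ₁ := by
    refine integral_congr_ae ?_
    filter_upwards [hae] with t ht
    rw [ht]
  rw [hint] at hP
  have hci : ∀ i : ℤ, fourierCoeff (Fl : AddCircle (1:ℝ) → ℂ) i
      = if 0 ≤ i then u i.toNat else 0 := by
    intro i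
    rw [hcoeff i]
    exact fourierCoeff_tsum u hu i
  have hsq := sq_summable u hu
  let v : ℤ → ℝ := fun i => ‖(if 0 ≤ i then u i.toNat else 0 : ℂ)‖ ^ 2
  have hpos : HasSum (fun k : ℕ => v (k : ℤ)) (∑' k, ‖u k‖ ^ 2) := by
    have hv : (fun k : ℕ => v (k : ℤ)) = fun k : ℕ => ‖u k‖ ^ 2 := by
      funext k
      show ‖(if 0 ≤ (k:ℤ) then u ((k:ℤ)).toNat else 0 : ℂ)‖ ^ 2 = ‖u k‖ ^ 2
      rw [if_pos (Int.natCast_nonneg k)]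
      simp
    rw [hv]
    exact hsq.hasSum
  have hneg : HasSum (fun k : ℕ => v (-((k:ℤ) + 1))) 0 := by
    have hv : (fun k : ℕ => v (-((k:ℤ) + 1))) = fun _ : ℕ => (0:ℝ) := by
      funext k
      show ‖(if 0 ≤ (-((k:ℤ)+1)) then u (-((k:ℤ)+1)).toNat else 0 : ℂ)‖ ^ 2 = 0
      rw [if_neg (by omega)]
      simp
    rw [hv]
    exact hasSum_zero
  have htot : HasSum v (∑' k, ‖u k‖ ^ 2 + 0) := hpos.of_nat_of_neg_add_one hneg
  rw [add_zero] at htot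
  calc ∑' k : ℕ, ‖u k‖ ^ 2
      = ∑' i : ℤ, v i := htot.tsum_eq.symm
    _ = ∑' i : ℤ, ‖fourierCoeff (Fl : AddCircle (1:ℝ) → ℂ) i‖ ^ 2 :=
        tsum_congr fun i => by rw [hci i]
    _ = ∫ t : AddCircle (1:ℝ), ‖F t‖ ^ 2 ∂μ₁ := hP
    _ = ∫ t : AddCircle (1:ℝ), ‖∑' k : ℕ, u k * fourier (k:ℤ) t‖ ^ 2 ∂μ₁ :=
        integral_congr_ae (Filter.Eventually.of_forall fun t => by simp only [hFdef])

/-- Taylor coefficients of a function analytic on the unit ball, with expansion valid on the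
whole ball. -/
lemma taylor_coeffs {f : ℂ → ℂ} (hf : DifferentiableOn ℂ f (Metric.ball 0 1)) :
    ∃ a : ℕ → ℂ, a 1 = deriv f 0 ∧
      ∀ z ∈ Metric.ball (0:ℂ) 1, HasSum (fun n => a n * z ^ n) (f z) := by
  have h2 : HasFPowerSeriesOnBall f (cauchyPowerSeries f 0 ((1/2 : NNReal) : ℝ)) 0
      ((1/2 : NNReal) : ENNReal) := by
    refine DifferentiableOn.hasFPowerSeriesOnBall (hf.mono ?_) (by norm_num)
    refine Metric.closedBall_subset_ball ?_
    push_cast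
    norm_num
  refine ⟨fun n => (cauchyPowerSeries f 0 ((1/2 : NNReal) : ℝ)).coeff n, ?_, ?_⟩
  · rw [h2.hasFPowerSeriesAt.deriv]
    rfl
  · intro z hz
    have hz1 : ‖z‖ < 1 := by simpa using hz
    have hn : (0:ℝ) ≤ (‖z‖ + 1) / 2 := by positivity
    set ρ : NNReal := ⟨(‖z‖ + 1) / 2, hn⟩ with hρdef
    have hρ1 : (ρ : ℝ) < 1 := by
      simp only [hρdef, NNReal.coe_mk]
      show (‖z‖ + 1) / 2 < 1
      linarith
    have hρz : ‖z‖ < (ρ : ℝ) := by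
      simp only [hρdef, NNReal.coe_mk]
      show ‖z‖ < (‖z‖ + 1) / 2
      linarith
    have hρ0 : 0 < ρ := by
      rw [← NNReal.coe_lt_coe]
      simp only [hρdef, NNReal.coe_mk, NNReal.coe_zero]
      show 0 < (‖z‖ + 1) / 2
      positivity
    have h3 : HasFPowerSeriesOnBall f (cauchyPowerSeries f 0 (ρ : ℝ)) 0 (ρ : ENNReal) := by
      refine DifferentiableOn.hasFPowerSeriesOnBall (hf.mono ?_) hρ0
      exact Metric.closedBall_subset_ball hρ1
    have heq : cauchyPowerSeries f 0 (ρ : ℝ) = cauchyPowerSeries f 0 ((1/2 : NNReal) : ℝ) :=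
      h3.hasFPowerSeriesAt.eq_formalMultilinearSeries h2.hasFPowerSeriesAt
    have hmem : z ∈ Metric.eball (0:ℂ) (ρ : ENNReal) := by
      rw [Metric.mem_eball, edist_zero_right, enorm_eq_nnnorm, ← ENNReal.coe_lt_coe.symm]
      · exact_mod_cast (by rwa [← coe_nnnorm, NNReal.coe_lt_coe] at hρz : ‖z‖₊ < ρ)
    have h4 := h3.hasSum hmem
    rw [heq, zero_add] at h4
    have : (fun n => cauchyPowerSeries f 0 ((1/2 : NNReal) : ℝ) n fun _ => z)
        = fun n => (cauchyPowerSeries f 0 ((1/2 : NNReal) : ℝ)).coeff n * z ^ n := by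
      funext n
      rw [FormalMultilinearSeries.apply_eq_pow_smul_coeff, smul_eq_mul, mul_comm]
    rwa [this] at h4

/-- Geometric decay: coefficients of a power series converging on the unit ball are
absolutely summable against any radius `r < 1`. -/
lemma summable_norm_coeff {a : ℕ → ℂ}
    (h : ∀ z ∈ Metric.ball (0:ℂ) 1, Summable fun n => a n * z ^ n)
    {r : ℝ} (hr0 : 0 ≤ r) (hr1 : r < 1) :
    Summable fun n => ‖a n‖ * r ^ n := by
  set ρ : ℝ := (r + 1) / 2 with hρdef
  have hρ0 : 0 < ρ := by positivity
  have hρ1 : ρ < 1 := by rw [hρdef]; linarith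
  have hrρ : r < ρ := by rw [hρdef]; linarith
  have hz : (ρ : ℂ) ∈ Metric.ball (0:ℂ) 1 := by
    rw [Metric.mem_ball, dist_zero_right, Complex.norm_real, Real.norm_eq_abs,
      _root_.abs_of_nonneg hρ0.le]
    exact hρ1
  have hs := h _ hz
  have ht : Tendsto (fun n => ‖a n * (ρ:ℂ) ^ n‖) atTop (𝓝 0) := by
    simpa using hs.tendsto_atTop_zero.norm
  obtain ⟨M, hM⟩ := ht.bddAbove_range
  have hM' : ∀ n : ℕ, ‖a n‖ * ρ ^ n ≤ M := by
    intro n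
    have := hM (Set.mem_range_self (f := fun n => ‖a n * (ρ:ℂ) ^ n‖) n)
    simpa [norm_mul, norm_pow, Complex.norm_real, Real.norm_eq_abs,
      _root_.abs_of_nonneg hρ0.le] using this
  have hgeom : Summable fun n : ℕ => M * (r / ρ) ^ n :=
    (summable_geometric_of_lt_one (by positivity)
      (by rw [div_lt_one hρ0]; exact hrρ)).mul_left M
  refine Summable.of_nonneg_of_le (fun n => by positivity) (fun n => ?_) hgeom
  have hpow : ρ ^ n * (r / ρ) ^ n = r ^ n := by
    rw [← mul_pow]
    congr 1
    field_simp
  calc ‖a n‖ * r ^ n = (‖a n‖ * ρ ^ n) * (r / ρ) ^ n := by rw [mul_assoc, hpow]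
    _ ≤ M * (r / ρ) ^ n := mul_le_mul_of_nonneg_right (hM' n) (by positivity)

lemma summable_norm_b {b : ℕ → ℂ} (hb : Summable fun n => ‖b n‖ ^ 2)
    {r : ℝ} (hr0 : 0 ≤ r) (hr1 : r < 1) :
    Summable fun n => ‖b n‖ * r ^ n := by
  refine Summable.of_nonneg_of_le (fun n => by positivity) (fun n => ?_)
    ((summable_geometric_of_lt_one hr0 hr1).add hb)
  have hrn1 : r ^ n ≤ 1 := pow_le_one₀ hr0 hr1.le
  have hb1 : ‖b n‖ ≤ 1 + ‖b n‖ ^ 2 := by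
    rcases le_or_gt (‖b n‖) 1 with h | h
    · nlinarith [sq_nonneg (‖b n‖)]
    · nlinarith
  calc ‖b n‖ * r ^ n ≤ (1 + ‖b n‖ ^ 2) * r ^ n :=
        mul_le_mul_of_nonneg_right hb1 (by positivity)
    _ = r ^ n + ‖b n‖ ^ 2 * r ^ n := by ring
    _ ≤ r ^ n + ‖b n‖ ^ 2 := by nlinarith [sq_nonneg (‖b n‖), pow_nonneg hr0 n]

end NeilAux

open NeilAux

local notation "μ₁" => (AddCircle.haarAddCircle : MeasureTheory.Measure (AddCircle (1:ℝ)))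

/-- **`H²_{α,β}` carries a representation of the Neil algebra.**  Fix `(α,β)` with
`|α|² + |β|² = 1`.  If `f` is a bounded analytic function on the unit disk with
`f'(0) = 0` (i.e. `f` belongs to the Neil algebra `𝔄`) and `g ∈ H²_{α,β}` has
coefficient sequence `b`, then the product `f·g` belongs to `H²_{α,β}`: it has a
square-summable coefficient sequence `c` satisfying `β c 0 = α c 1` whose power series
sums to `f(z)·g(z)` on the disk. -/
theorem neil_mult_H2ab (α β : ℂ) (hαβ : ‖α‖ ^ 2 + ‖β‖ ^ 2 = 1)
    (f : ℂ → ℂ) (hfan : DifferentiableOn ℂ f (Metric.ball (0 : ℂ) 1))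
    (hfbd : ∃ C : ℝ, ∀ z ∈ Metric.ball (0 : ℂ) 1, ‖f z‖ ≤ C)
    (hf' : deriv f 0 = 0)
    (b : ℕ → ℂ) (hb : MemH2ab α β b) :
    ∃ c : ℕ → ℂ, MemH2ab α β c ∧
      ∀ z ∈ Metric.ball (0 : ℂ) 1, ∑' n, c n * z ^ n = f z * ∑' n, b n * z ^ n := by
  classical
  obtain ⟨a, ha1, haS⟩ := taylor_coeffs hfan
  have ha1' : a 1 = 0 := by rw [ha1, hf']
  have hb1 : Summable fun n => ‖b n‖ ^ 2 := by
    have := hb.1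
    simpa [MemHardy2] using this
  set c : ℕ → ℂ := fun n => ∑ kl ∈ Finset.HasAntidiagonal.antidiagonal n, a kl.1 * b kl.2 with hcdef
  -- coefficient norm summability on the ball
  have haSummable : ∀ z ∈ Metric.ball (0:ℂ) 1, Summable fun n => a n * z ^ n :=
    fun z hz => (haS z hz).summable
  have hnormz : ∀ z : ℂ, z ∈ Metric.ball (0:ℂ) 1 → ‖z‖ < 1 := by
    intro z hz; simpa using hz
  have hA : ∀ z ∈ Metric.ball (0:ℂ) 1, Summable fun n => ‖a n * z ^ n‖ := by
    intro z hz
    have := summable_norm_coeff haSummable (norm_nonneg z) (hnormz z hz)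
    simpa [norm_mul, norm_pow] using this
  have hB : ∀ z ∈ Metric.ball (0:ℂ) 1, Summable fun n => ‖b n * z ^ n‖ := by
    intro z hz
    have := summable_norm_b hb1 (norm_nonneg z) (hnormz z hz)
    simpa [norm_mul, norm_pow] using this
  -- Cauchy product representation of `c n * z ^ n`
  have hcz : ∀ (z : ℂ) (n : ℕ), c n * z ^ n
      = ∑ kl ∈ Finset.HasAntidiagonal.antidiagonal n, (a kl.1 * z ^ kl.1) * (b kl.2 * z ^ kl.2) := by
    intro z n
    rw [show c n = ∑ kl ∈ Finset.HasAntidiagonal.antidiagonal n, a kl.1 * b kl.2 from rfl]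
    rw [Finset.sum_mul]
    refine Finset.sum_congr rfl fun kl hkl => ?_
    have hn := Finset.HasAntidiagonal.mem_antidiagonal.mp hkl
    rw [← hn, pow_add]
    ring
  -- the product formula
  have hprod : ∀ z ∈ Metric.ball (0:ℂ) 1,
      ∑' n, c n * z ^ n = f z * ∑' n, b n * z ^ n := by
    intro z hz
    calc ∑' n, c n * z ^ n
        = ∑' n, ∑ kl ∈ Finset.HasAntidiagonal.antidiagonal n, (a kl.1 * z ^ kl.1) * (b kl.2 * z ^ kl.2) :=
          tsum_congr (hcz z)
      _ = (∑' n, a n * z ^ n) * ∑' n, b n * z ^ n :=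
          (tsum_mul_tsum_eq_tsum_sum_antidiagonal_of_summable_norm (hA z hz) (hB z hz)).symm
      _ = f z * ∑' n, b n * z ^ n := by rw [(haS z hz).tsum_eq]
  -- the constraint
  have hc0 : c 0 = a 0 * b 0 := by simp [hcdef]
  have hc1 : c 1 = a 0 * b 1 := by
    have : c 1 = ∑ kl ∈ Finset.HasAntidiagonal.antidiagonal 1, a kl.1 * b kl.2 := rfl
    rw [this, show (1:ℕ) = 0 + 1 from rfl, Finset.Nat.antidiagonal_succ]
    simp [Prod.map, ha1']
  have hconstraint : β * c 0 = α * c 1 := by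
    rw [hc0, hc1]
    calc β * (a 0 * b 0) = a 0 * (β * b 0) := by ring
      _ = a 0 * (α * b 1) := by rw [hb.2]
      _ = α * (a 0 * b 1) := by ring
  -- boundedness constant
  obtain ⟨C, hC⟩ := hfbd
  have hC0 : 0 ≤ C := le_trans (norm_nonneg _) (hC 0 (by simp))
  set B : ℝ := ∑' n, ‖b n‖ ^ 2 with hBdef
  have hB0 : 0 ≤ B := tsum_nonneg fun n => sq_nonneg _
  -- key estimate for each radius r < 1
  have key : ∀ r : ℝ, 0 ≤ r → r < 1 →
      ∑' n, ‖c n * (r:ℂ) ^ n‖ ^ 2 ≤ C ^ 2 * B := by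
    intro r hr0 hr1
    have hrball : ((r:ℂ)) ∈ Metric.ball (0:ℂ) 1 := by
      rw [Metric.mem_ball, dist_zero_right, Complex.norm_real, Real.norm_eq_abs,
        _root_.abs_of_nonneg hr0]
      exact hr1
    have hAr : Summable fun n => ‖a n * (r:ℂ) ^ n‖ := hA _ hrball
    have hBr : Summable fun n => ‖b n * (r:ℂ) ^ n‖ := hB _ hrball
    have hcu : Summable fun n => ‖c n * (r:ℂ) ^ n‖ := by
      have := summable_norm_sum_mul_antidiagonal_of_summable_norm hAr hBr
      refine this.congr fun n => ?_
      rw [← hcz (r:ℂ) n]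
    have P1 := parseval_nat (fun k => c k * (r:ℂ) ^ k) hcu
    have P2 := parseval_nat (fun k => b k * (r:ℂ) ^ k) hBr
    -- the pointwise bound on the circle
    have hpt : ∀ t : AddCircle (1:ℝ),
        ‖∑' k : ℕ, (c k * (r:ℂ) ^ k) * fourier (k:ℤ) t‖ ^ 2
          ≤ C ^ 2 * ‖∑' k : ℕ, (b k * (r:ℂ) ^ k) * fourier (k:ℤ) t‖ ^ 2 := by
      intro t
      induction t using QuotientAddGroup.induction_on with
      | H x =>
        set e : ℂ := Complex.exp (((2 * Real.pi * x : ℝ) : ℂ) * I) with hedef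
        have hfour : ∀ k : ℕ, (fourier (k:ℤ) (x : AddCircle (1:ℝ)) : ℂ) = e ^ k := by
          intro k
          rw [fourier_coe_apply]
          rw [hedef, ← Complex.exp_nat_mul]
          congr 1
          push_cast
          ring
        have hener : ‖e‖ = 1 := by
          rw [hedef]
          exact Complex.norm_exp_ofReal_mul_I _
        set z : ℂ := (r:ℂ) * e with hzdef
        have hzball : z ∈ Metric.ball (0:ℂ) 1 := by
          rw [Metric.mem_ball, dist_zero_right, hzdef, norm_mul, hener, mul_one,
            Complex.norm_real, Real.norm_eq_abs, _root_.abs_of_nonneg hr0]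
          exact hr1
        have hterm : ∀ (u : ℕ → ℂ) (k : ℕ),
            (u k * (r:ℂ) ^ k) * fourier (k:ℤ) (x : AddCircle (1:ℝ)) = u k * z ^ k := by
          intro u k
          rw [hfour k, hzdef, mul_pow]
          ring
        have h1 : (∑' k : ℕ, (c k * (r:ℂ) ^ k) * fourier (k:ℤ) (x : AddCircle (1:ℝ)))
            = ∑' k, c k * z ^ k := by
          exact tsum_congr (hterm c)
        have h2 : (∑' k : ℕ, (b k * (r:ℂ) ^ k) * fourier (k:ℤ) (x : AddCircle (1:ℝ)))
            = ∑' k, b k * z ^ k := by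
          exact tsum_congr (hterm b)
        rw [h1, h2, hprod z hzball, norm_mul, mul_pow]
        have hfz : ‖f z‖ ≤ C := by
          exact hC z hzball
        have : ‖f z‖ ^ 2 ≤ C ^ 2 := by nlinarith [norm_nonneg (f z)]
        nlinarith [sq_nonneg (‖∑' k, b k * z ^ k‖), norm_nonneg (∑' k, b k * z ^ k)]
    -- integrate the pointwise bound
    have hFc : Continuous (fun t : AddCircle (1:ℝ) =>
        ∑' k : ℕ, (c k * (r:ℂ) ^ k) * fourier (k:ℤ) t) := cont_F _ hcu
    have hFb : Continuous (fun t : AddCircle (1:ℝ) =>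
        ∑' k : ℕ, (b k * (r:ℂ) ^ k) * fourier (k:ℤ) t) := cont_F _ hBr
    have hint1 : Integrable (fun t : AddCircle (1:ℝ) =>
        ‖∑' k : ℕ, (c k * (r:ℂ) ^ k) * fourier (k:ℤ) t‖ ^ 2) μ₁ :=
      cont_integrable (hFc.norm.pow 2)
    have hint2 : Integrable (fun t : AddCircle (1:ℝ) =>
        C ^ 2 * ‖∑' k : ℕ, (b k * (r:ℂ) ^ k) * fourier (k:ℤ) t‖ ^ 2) μ₁ :=
      cont_integrable (continuous_const.mul (hFb.norm.pow 2))
    have hmono := integral_mono (μ := μ₁) hint1 hint2 hpt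
    have hBsum : ∑' k, ‖b k * (r:ℂ) ^ k‖ ^ 2 ≤ B := by
      refine Summable.tsum_le_tsum (fun k => ?_) (sq_summable _ hBr) hb1
      have h1 : ‖b k * (r:ℂ) ^ k‖ = ‖b k‖ * r ^ k := by
        rw [norm_mul, norm_pow, Complex.norm_real, Real.norm_eq_abs, _root_.abs_of_nonneg hr0]
      rw [h1]
      have h2 : r ^ k ≤ 1 := pow_le_one₀ hr0 hr1.le
      have h3 : (0:ℝ) ≤ r ^ k := by positivity
      have h4 : (r ^ k) ^ 2 ≤ 1 := by nlinarith
      calc (‖b k‖ * r ^ k) ^ 2 = ‖b k‖ ^ 2 * (r ^ k) ^ 2 := by ring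
        _ ≤ ‖b k‖ ^ 2 * 1 := mul_le_mul_of_nonneg_left h4 (sq_nonneg _)
        _ = ‖b k‖ ^ 2 := mul_one _
    calc ∑' n, ‖c n * (r:ℂ) ^ n‖ ^ 2
        = ∫ t : AddCircle (1:ℝ), ‖∑' k : ℕ, (c k * (r:ℂ) ^ k) * fourier (k:ℤ) t‖ ^ 2 ∂μ₁ := P1
      _ ≤ ∫ t : AddCircle (1:ℝ),
            C ^ 2 * ‖∑' k : ℕ, (b k * (r:ℂ) ^ k) * fourier (k:ℤ) t‖ ^ 2 ∂μ₁ := hmono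
      _ = C ^ 2 * ∫ t : AddCircle (1:ℝ),
            ‖∑' k : ℕ, (b k * (r:ℂ) ^ k) * fourier (k:ℤ) t‖ ^ 2 ∂μ₁ :=
          integral_const_mul _ _
      _ = C ^ 2 * ∑' k, ‖b k * (r:ℂ) ^ k‖ ^ 2 := by rw [← P2]
      _ ≤ C ^ 2 * B := mul_le_mul_of_nonneg_left hBsum (by positivity)
  -- conclusion: square-summability of c
  have hcsum : ∀ r : ℝ, 0 ≤ r → r < 1 → Summable fun n => ‖c n * (r:ℂ) ^ n‖ := by
    intro r hr0 hr1
    have hrball : ((r:ℂ)) ∈ Metric.ball (0:ℂ) 1 := by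
      rw [Metric.mem_ball, dist_zero_right, Complex.norm_real, Real.norm_eq_abs,
        _root_.abs_of_nonneg hr0]
      exact hr1
    have := summable_norm_sum_mul_antidiagonal_of_summable_norm (hA _ hrball) (hB _ hrball)
    refine this.congr fun n => ?_
    rw [← hcz (r:ℂ) n]
  refine ⟨c, ⟨?_, hconstraint⟩, hprod⟩
  rw [MemHardy2]
  have hgoal : ∀ N : ℕ, ∑ n ∈ Finset.range N, ‖c n‖ ^ 2 ≤ C ^ 2 * B := by
    intro N
    set φ : ℝ → ℝ := fun r => ∑ n ∈ Finset.range N, (‖c n‖ * r ^ n) ^ 2 with hφdef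
    have hφcont : Continuous φ := by
      refine continuous_finset_sum _ fun n _ => ?_
      fun_prop
    have hφle : ∀ r : ℝ, 0 ≤ r → r < 1 → φ r ≤ C ^ 2 * B := by
      intro r hr0 hr1
      have hterm : ∀ n : ℕ, (‖c n‖ * r ^ n) ^ 2 = ‖c n * (r:ℂ) ^ n‖ ^ 2 := by
        intro n
        rw [norm_mul, norm_pow, Complex.norm_real, Real.norm_eq_abs,
          _root_.abs_of_nonneg hr0]
      calc φ r = ∑ n ∈ Finset.range N, ‖c n * (r:ℂ) ^ n‖ ^ 2 :=
            Finset.sum_congr rfl fun n _ => hterm n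
        _ ≤ ∑' n, ‖c n * (r:ℂ) ^ n‖ ^ 2 :=
            Summable.sum_le_tsum _ (fun n _ => sq_nonneg _) (sq_summable _ (hcsum r hr0 hr1))
        _ ≤ C ^ 2 * B := key r hr0 hr1
    set s : ℕ → ℝ := fun j => 1 - 1 / ((j:ℝ) + 2) with hsdef
    have hs0 : ∀ j, 0 ≤ s j := by
      intro j
      have h2 : (0:ℝ) < (j:ℝ) + 2 := by positivity
      have : 1 / ((j:ℝ) + 2) ≤ 1 := by
        rw [div_le_one h2]
        have := Nat.cast_nonneg (α := ℝ) j
        linarith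
      simp only [hsdef]
      linarith
    have hs1 : ∀ j, s j < 1 := by
      intro j
      have : 0 < 1 / ((j:ℝ) + 2) := by positivity
      simp only [hsdef]
      linarith
    have hstend : Tendsto s atTop (𝓝 1) := by
      have h1 : Tendsto (fun j : ℕ => ((j:ℝ) + 2)) atTop atTop :=
        tendsto_atTop_add_const_right _ 2 tendsto_natCast_atTop_atTop
      have h2 : Tendsto (fun j : ℕ => 1 / ((j:ℝ) + 2)) atTop (𝓝 0) := by
        simpa [one_div, Pi.inv_def] using h1.inv_tendsto_atTop
      have h3 : Tendsto (fun j : ℕ => 1 - 1 / ((j:ℝ) + 2)) atTop (𝓝 (1 - 0)) :=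
        Filter.Tendsto.sub tendsto_const_nhds h2
      rw [sub_zero] at h3
      exact h3
    have hφtend : Tendsto (fun j => φ (s j)) atTop (𝓝 (φ 1)) :=
      (hφcont.continuousAt).tendsto.comp hstend
    have hlim : φ 1 ≤ C ^ 2 * B :=
      le_of_tendsto hφtend (Eventually.of_forall fun j => hφle _ (hs0 j) (hs1 j))
    have hφ1 : φ 1 = ∑ n ∈ Finset.range N, ‖c n‖ ^ 2 := by
      simp only [hφdef]
      refine Finset.sum_congr rfl fun n _ => ?_
      rw [one_pow, mul_one]
    rw [← hφ1]
    exact hlim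
  exact summable_of_sum_range_le (fun n => by positivity) hgoal
end
end

section
/- Let M be a closed subspace of L²(μ) for a measure μ, and let φ ∈ L^∞(μ) be unimodular, i.e. |φ| = 1 almost everywhere. If there exists ψ ∈ L^∞(μ) which is a multiplier of M and satisfies ‖φ − ψ‖_{L^∞} < 1, then the Toeplitz operator T_φ : M → M is left-invertible. If moreover ψ is invertible in L^∞ with ψ⁻¹ also a multiplier of M, then T_φ is invertible. -/
set_option maxHeartbeats 1000000

open MeasureTheory Complex
open scoped ENNReal ComplexConjugate NNReal

noncomputable section

/-- `T : M → M` is the compressed multiplication (Toeplitz) operator `T_χ f = P_M (χ f)`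
on a subspace `M ⊆ L²(μ)`: for every `f ∈ M` and every `g ∈ L²(μ)` representing the
function `χ·f`, the difference `g - T f` is orthogonal to `M` (so `T f` is the orthogonal
projection of `χ·f` onto `M`). -/
def IsToeplitz {X : Type*} [MeasurableSpace X] (μ : Measure X)
    (M : Submodule ℂ (Lp ℂ 2 μ)) (χ : X → ℂ) (T : ↥M →L[ℂ] ↥M) : Prop :=
  ∀ f : ↥M, ∀ g : Lp ℂ 2 μ,
    ((g : X → ℂ) =ᵐ[μ] fun x => χ x * ((f : Lp ℂ 2 μ) : X → ℂ) x) →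
    ∀ h ∈ M, (inner ℂ (g - ((T f : Lp ℂ 2 μ))) h : ℂ) = 0

/-- `ψ ∈ L^∞(μ)` is a multiplier of the subspace `M ⊆ L²(μ)`: `ψ f ∈ M` for every
`f ∈ M`. -/
def IsMultiplier {X : Type*} [MeasurableSpace X] (μ : Measure X)
    (M : Submodule ℂ (Lp ℂ 2 μ)) (ψ : X → ℂ) : Prop :=
  ∀ f : Lp ℂ 2 μ, f ∈ M → ∀ g : Lp ℂ 2 μ,
    ((g : X → ℂ) =ᵐ[μ] fun x => ψ x * (f : X → ℂ) x) → g ∈ M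

section Aux

variable {X : Type*} [MeasurableSpace X] {μ : Measure X}

lemma memLp_mul_bd {χ : X → ℂ} (hχ : AEStronglyMeasurable χ μ) {C : ℝ}
    (hC : ∀ᵐ x ∂μ, ‖χ x‖ ≤ C) (f : Lp ℂ 2 μ) :
    MemLp (fun x => χ x * (f : X → ℂ) x) 2 μ :=
  (Lp.memLp f).of_le_mul (hχ.mul (Lp.aestronglyMeasurable f))
    (hC.mono fun x hx => by rw [norm_mul]; exact mul_le_mul_of_nonneg_right hx (norm_nonneg _))

lemma norm_le_of_ae_bd {χ : X → ℂ} {C : ℝ} (hC : 0 ≤ C)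
    (hbd : ∀ᵐ x ∂μ, ‖χ x‖ ≤ C) (f g : Lp ℂ 2 μ)
    (hg : (g : X → ℂ) =ᵐ[μ] fun x => χ x * (f : X → ℂ) x) : ‖g‖ ≤ C * ‖f‖ := by
  have h1 : eLpNorm (g : X → ℂ) 2 μ ≤ C.toNNReal • eLpNorm (f : X → ℂ) 2 μ := by
    rw [eLpNorm_congr_ae hg]
    refine eLpNorm_le_nnreal_smul_eLpNorm_of_ae_le_mul (hbd.mono fun x hx => ?_) 2
    rw [nnnorm_mul]
    refine mul_le_mul_left ?_ _
    rw [← norm_toNNReal]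
    exact Real.toNNReal_mono hx
  rw [Lp.norm_def, Lp.norm_def]
  have hfin : (C.toNNReal : ℝ≥0∞) • eLpNorm (f : X → ℂ) 2 μ ≠ ∞ := by
    simp [ENNReal.mul_ne_top, (Lp.eLpNorm_lt_top f).ne]
  calc (eLpNorm (g : X → ℂ) 2 μ).toReal
      ≤ ((C.toNNReal : ℝ≥0∞) • eLpNorm (f : X → ℂ) 2 μ).toReal := ENNReal.toReal_mono hfin h1
    _ = C * (eLpNorm (f : X → ℂ) 2 μ).toReal := by
        rw [smul_eq_mul, ENNReal.toReal_mul, ENNReal.coe_toReal, Real.coe_toNNReal C hC]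

lemma norm_eq_of_ae_unimodular {χ : X → ℂ} (hbd : ∀ᵐ x ∂μ, ‖χ x‖ = 1) (f g : Lp ℂ 2 μ)
    (hg : (g : X → ℂ) =ᵐ[μ] fun x => χ x * (f : X → ℂ) x) : ‖g‖ = ‖f‖ := by
  rw [Lp.norm_def, Lp.norm_def, eLpNorm_congr_ae hg]
  congr 1
  refine eLpNorm_congr_norm_ae (hbd.mono fun x hx => ?_)
  rw [norm_mul, hx, one_mul]

variable {H : Type*} [NormedAddCommGroup H] [InnerProductSpace ℂ H] [CompleteSpace H]

lemma exists_left_inverse_of_antilipschitz {T : H →L[ℂ] H} {c : ℝ≥0}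
    (hT : AntilipschitzWith c T) :
    ∃ S : H →L[ℂ] H, S.comp T = ContinuousLinearMap.id ℂ H := by
  set R : Submodule ℂ H := T.range with hR
  haveI : CompleteSpace R := hT.completeSpace_range_clm
  have hinj : Function.Injective T := hT.injective
  set f₁ : H →L[ℂ] R := T.codRestrict R (fun x => LinearMap.mem_range_self _ x) with hf₁
  have hker : f₁.ker = ⊥ := by
    rw [LinearMap.ker_eq_bot]
    intro x y hxy
    apply hinj
    have := congrArg (Subtype.val) hxy
    simpa [hf₁] using this
  have hrange : f₁.range = ⊤ := by
    rw [LinearMap.range_eq_top]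
    rintro ⟨y, hy⟩
    obtain ⟨x, hx⟩ := hy
    exact ⟨x, Subtype.ext (by simpa [hf₁] using hx)⟩
  set e := ContinuousLinearEquiv.ofBijective f₁ hker hrange with he
  refine ⟨(e.symm : R →L[ℂ] H).comp R.orthogonalProjectionOnto, ?_⟩
  ext x
  have h1 : R.orthogonalProjectionOnto (T x) = f₁ x := by
    have h2 := Submodule.orthogonalProjectionOnto_mem_subspace_eq_self (K := R) (f₁ x)
    simpa [hf₁] using h2
  simp only [ContinuousLinearMap.coe_comp', Function.comp_apply, ContinuousLinearMap.coe_id',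
    id_eq, h1]
  have h3 : e x = f₁ x := rfl
  rw [← h3]
  exact e.symm_apply_apply x

lemma exists_inverse_of_bij {T : H →L[ℂ] H} (hker : T.ker = ⊥)
    (hsurj : T.range = ⊤) :
    ∃ S : H →L[ℂ] H, S.comp T = ContinuousLinearMap.id ℂ H ∧
      T.comp S = ContinuousLinearMap.id ℂ H := by
  set e := ContinuousLinearEquiv.ofBijective T hker hsurj with he
  refine ⟨(e.symm : H →L[ℂ] H), ?_, ?_⟩
  · ext x
    have h3 : e x = T x := rfl
    simp only [ContinuousLinearMap.coe_comp', Function.comp_apply, ContinuousLinearMap.coe_id',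
      id_eq, ← h3]
    exact e.symm_apply_apply x
  · ext x
    have h3 : ∀ y, e y = T y := fun _ => rfl
    simp only [ContinuousLinearMap.coe_comp', Function.comp_apply, ContinuousLinearMap.coe_id',
      id_eq, ContinuousLinearEquiv.coe_coe, ← h3]
    exact e.apply_symm_apply x

lemma pointwise_est {a b binv : ℂ} {ε : ℝ} (hε0 : 0 ≤ ε) (hε1 : ε < 1)
    (ha : ‖a‖ = 1) (hab : ‖a - b‖ ≤ ε) (hb : b * binv = 1) :
    ‖a * binv - (((1 - ε^2)⁻¹ : ℝ) : ℂ)‖ ≤ ε * (1 - ε^2)⁻¹ := by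
  have hc0 : (0:ℝ) < 1 - ε^2 := by nlinarith
  set c : ℝ := (1 - ε^2)⁻¹ with hc
  have hcpos : 0 < c := inv_pos.mpr hc0
  have hc' : c * (1 - ε^2) = 1 := inv_mul_cancel₀ hc0.ne'
  have hbne : b ≠ 0 := fun h => by simp [h] at hb
  have hbinv : binv = b⁻¹ := eq_inv_of_mul_eq_one_right hb
  have hbpos : 0 < ‖b‖ := norm_pos_iff.mpr hbne
  have key : ‖a - (c:ℂ)*b‖ ≤ ε*c*‖b‖ := by
    have hsq : ‖a - (c:ℂ)*b‖^2 ≤ (ε*c*‖b‖)^2 := by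
      have e1 : ‖a - b‖^2 = (a.re - b.re)^2 + (a.im - b.im)^2 := by
        rw [Complex.sq_norm]
        simp [Complex.normSq_apply, Complex.sub_re, Complex.sub_im]; ring
      have e2 : ‖a - (c:ℂ)*b‖^2 = (a.re - c*b.re)^2 + (a.im - c*b.im)^2 := by
        rw [Complex.sq_norm]
        simp [Complex.normSq_apply, Complex.sub_re, Complex.sub_im, Complex.mul_re,
          Complex.mul_im, Complex.ofReal_re, Complex.ofReal_im]; ring
      have e3 : ‖b‖^2 = b.re^2 + b.im^2 := by
        rw [Complex.sq_norm]
        simp [Complex.normSq_apply]; ring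
      have e4 : a.re^2 + a.im^2 = 1 := by
        have := congrArg (· ^ 2) ha
        simp only [Complex.sq_norm, Complex.normSq_apply, one_pow] at this
        nlinarith [this]
      have h1 : (a.re - b.re)^2 + (a.im - b.im)^2 ≤ ε^2 := by
        rw [← e1]; nlinarith [norm_nonneg (a-b)]
      rw [e2, mul_pow, mul_pow, e3]
      nlinarith [mul_le_mul_of_nonneg_left h1 hcpos.le, sq_nonneg (b.re^2 + b.im^2),
        mul_nonneg (mul_nonneg hcpos.le hcpos.le) (add_nonneg (sq_nonneg b.re) (sq_nonneg b.im))]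
    have hrhs : 0 ≤ ε*c*‖b‖ := by positivity
    nlinarith [norm_nonneg (a - (c:ℂ)*b)]
  have heq : a * binv - ((c:ℝ):ℂ) = (a - (c:ℂ)*b) * b⁻¹ := by
    rw [hbinv]; field_simp
  rw [heq, norm_mul, norm_inv]
  calc ‖a - (c:ℂ)*b‖ * ‖b‖⁻¹ ≤ (ε*c*‖b‖) * ‖b‖⁻¹ :=
        mul_le_mul_of_nonneg_right key (by positivity)
    _ = ε * c := by rw [mul_assoc, mul_inv_cancel₀ hbpos.ne', mul_one]

end Aux

/-- If `φ ∈ L^∞(μ)` is unimodular and there is a multiplier `ψ` of the closed subspace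
`M ⊆ L²(μ)` with `‖φ - ψ‖_∞ < 1`, then the Toeplitz operator `T_φ : M → M` is
left-invertible; if moreover `ψ` is invertible in `L^∞` with inverse `ψinv` which is also
a multiplier of `M`, then `T_φ` is invertible. -/
theorem toeplitz_left_invertible_of_close_symbol
    {X : Type*} [MeasurableSpace X] (μ : Measure X)
    (M : Submodule ℂ (Lp ℂ 2 μ)) (hM : IsClosed (M : Set (Lp ℂ 2 μ)))
    (φ ψ : X → ℂ) (hφ : MemLp φ ⊤ μ)
    (hφuni : ∀ᵐ x ∂μ, ‖φ x‖ = 1)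
    (hψ : MemLp ψ ⊤ μ) (hψmult : IsMultiplier μ M ψ)
    (hdist : eLpNorm (φ - ψ) ⊤ μ < 1)
    (T : ↥M →L[ℂ] ↥M) (hT : IsToeplitz μ M φ T) :
    (∃ S : ↥M →L[ℂ] ↥M, S.comp T = ContinuousLinearMap.id ℂ ↥M) ∧
      (∀ ψinv : X → ℂ, MemLp ψinv ⊤ μ →
        ((fun x => ψ x * ψinv x) =ᵐ[μ] fun _ => (1 : ℂ)) →
        IsMultiplier μ M ψinv →
        ∃ S : ↥M →L[ℂ] ↥M, S.comp T = ContinuousLinearMap.id ℂ ↥M ∧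
          T.comp S = ContinuousLinearMap.id ℂ ↥M) := by
  haveI : CompleteSpace ↥M := hM.completeSpace_coe
  -- basic a.e. estimates
  set ε : ℝ := (eLpNorm (φ - ψ) ⊤ μ).toReal with hεdef
  have hεne : eLpNorm (φ - ψ) ⊤ μ ≠ ∞ := (hdist.trans (by norm_num)).ne
  have hε1 : ε < 1 := by
    have := (ENNReal.toReal_lt_toReal hεne ENNReal.one_ne_top).mpr hdist
    simpa [hεdef] using this
  have hε0 : 0 ≤ ε := ENNReal.toReal_nonneg
  have hφ_ae : ∀ᵐ x ∂μ, ‖φ x‖ = 1 := hφuni.mono fun x hx => by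
    exact hx
  have hdiff_ae : ∀ᵐ x ∂μ, ‖φ x - ψ x‖ ≤ ε := by
    have h := ae_le_eLpNormEssSup (f := φ - ψ) (μ := μ)
    refine h.mono fun x hx => ?_
    have h2 : (‖(φ - ψ) x‖₊ : ℝ≥0∞) ≤ eLpNorm (φ - ψ) ⊤ μ := by
      rwa [eLpNorm_exponent_top]
    have h3 := ENNReal.toReal_mono hεne h2
    simpa [Pi.sub_apply, hεdef] using h3
  have hψ_ae : ∀ᵐ x ∂μ, ‖ψ x‖ ≤ 1 + ε := by
    filter_upwards [hφ_ae, hdiff_ae] with x h1 h2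
    calc ‖ψ x‖ = ‖φ x - (φ x - ψ x)‖ := by ring_nf
      _ ≤ ‖φ x‖ + ‖φ x - ψ x‖ := norm_sub_le _ _
      _ ≤ 1 + ε := by rw [h1]; linarith
  -- the key lower bound
  have hlow : ∀ f : ↥M, (1 - ε) * ‖f‖ ≤ (1 + ε) * ‖T f‖ := by
    intro f
    set fE : Lp ℂ 2 μ := (f : Lp ℂ 2 μ) with hfE
    have mφf : MemLp (fun x => φ x * (fE : X → ℂ) x) 2 μ :=
      memLp_mul_bd hφ.1 (hφ_ae.mono fun x hx => hx.le) fE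
    have mψf : MemLp (fun x => ψ x * (fE : X → ℂ) x) 2 μ :=
      memLp_mul_bd hψ.1 hψ_ae fE
    have mδf : MemLp (fun x => (φ x - ψ x) * (fE : X → ℂ) x) 2 μ :=
      memLp_mul_bd (hφ.1.sub hψ.1) hdiff_ae fE
    set φf := mφf.toLp _ with hφfdef
    set ψf := mψf.toLp _ with hψfdef
    set δf := mδf.toLp _ with hδfdef
    have hφf_ae := mφf.coeFn_toLp
    have hψf_ae := mψf.coeFn_toLp
    have hδf_ae := mδf.coeFn_toLp
    have hψf_mem : ψf ∈ M := hψmult fE f.2 ψf hψf_ae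
    have hnφ : ‖φf‖ = ‖fE‖ := norm_eq_of_ae_unimodular hφ_ae fE φf hφf_ae
    have hnδ : ‖δf‖ ≤ ε * ‖fE‖ := norm_le_of_ae_bd hε0 hdiff_ae fE δf hδf_ae
    have hnψ : ‖ψf‖ ≤ (1 + ε) * ‖fE‖ := norm_le_of_ae_bd (by linarith) hψ_ae fE ψf hψf_ae
    have hψf_eq : ψf = φf - δf := by
      apply Lp.ext
      filter_upwards [hψf_ae, hφf_ae, hδf_ae, Lp.coeFn_sub φf δf] with x h1 h2 h3 h4
      rw [h1, h4, Pi.sub_apply, h2, h3]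
      ring
    have hortho := hT f φf hφf_ae ψf hψf_mem
    have hinner : (inner ℂ (↑(T f) : Lp ℂ 2 μ) ψf : ℂ) = inner ℂ φf ψf := by
      rw [inner_sub_left, sub_eq_zero] at hortho
      exact hortho.symm
    have hre1 : ‖fE‖^2 - ε * ‖fE‖ * ‖fE‖ ≤ (inner ℂ φf ψf : ℂ).re := by
      rw [hψf_eq, inner_sub_right]
      have h6 : (inner ℂ φf φf : ℂ) = (‖φf‖ : ℂ)^2 := inner_self_eq_norm_sq_to_K φf
      have h7 : |(inner ℂ φf δf : ℂ).re| ≤ ‖φf‖ * ‖δf‖ := by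
        refine (Complex.abs_re_le_norm _).trans ?_
        exact norm_inner_le_norm φf δf
      have h8 : ‖φf‖ * ‖δf‖ ≤ ‖fE‖ * (ε * ‖fE‖) :=
        mul_le_mul (le_of_eq hnφ) hnδ (norm_nonneg _) (norm_nonneg _)
      have h9 : (inner ℂ φf φf : ℂ).re = ‖fE‖^2 := by
        rw [h6, hnφ, ← Complex.ofReal_pow, Complex.ofReal_re]
      rw [Complex.sub_re, h9]
      have := abs_le.mp h7
      nlinarith
    have hre2 : (inner ℂ (↑(T f) : Lp ℂ 2 μ) ψf : ℂ).re ≤ ‖T f‖ * ((1 + ε) * ‖fE‖) := by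
      refine (Complex.re_le_norm _).trans ?_
      refine (norm_inner_le_norm _ _).trans ?_
      have hTfn : ‖(↑(T f) : Lp ℂ 2 μ)‖ = ‖T f‖ := rfl
      rw [hTfn]
      exact mul_le_mul_of_nonneg_left hnψ (norm_nonneg _)
    have hff : ‖f‖ = ‖fE‖ := rfl
    rw [hff]
    have hcomb : ‖fE‖^2 - ε * ‖fE‖ * ‖fE‖ ≤ ‖T f‖ * ((1 + ε) * ‖fE‖) := by
      calc ‖fE‖^2 - ε * ‖fE‖ * ‖fE‖ ≤ (inner ℂ φf ψf : ℂ).re := hre1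
        _ = (inner ℂ (↑(T f) : Lp ℂ 2 μ) ψf : ℂ).re := by rw [hinner]
        _ ≤ ‖T f‖ * ((1 + ε) * ‖fE‖) := hre2
    by_cases hf0 : ‖fE‖ = 0
    · rw [hf0, mul_zero]
      positivity
    · have hpos : 0 < ‖fE‖ := lt_of_le_of_ne (norm_nonneg _) (Ne.symm hf0)
      nlinarith [hpos, hcomb]
  have h1ε : (0:ℝ) < 1 - ε := by linarith
  have hanti : AntilipschitzWith ((1 + ε)/(1 - ε)).toNNReal T := by
    refine T.antilipschitz_of_bound fun x => ?_
    have h := hlow x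
    have hK : (((1 + ε)/(1 - ε)).toNNReal : ℝ) = (1 + ε)/(1 - ε) :=
      Real.coe_toNNReal _ (by positivity)
    rw [hK, div_mul_eq_mul_div, le_div_iff₀ h1ε]
    nlinarith
  constructor
  · exact exists_left_inverse_of_antilipschitz hanti
  · intro ψinv hψinv hinvae hψinvmult
    set c : ℝ := (1 - ε^2)⁻¹ with hcdef
    have hc0 : (0:ℝ) < 1 - ε^2 := by nlinarith
    have hcpos : 0 < c := inv_pos.mpr hc0
    have hχ_ae : ∀ᵐ x ∂μ, ‖φ x * ψinv x - (c:ℂ)‖ ≤ ε * c := by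
      filter_upwards [hφ_ae, hdiff_ae, hinvae] with x h1 h2 h3
      exact pointwise_est hε0 hε1 h1 h2 h3
    have hψinv_ae : ∀ᵐ x ∂μ, ‖ψinv x‖ ≤ (1 - ε)⁻¹ := by
      filter_upwards [hφ_ae, hdiff_ae, hinvae] with x h1 h2 h3
      have hψlow : 1 - ε ≤ ‖ψ x‖ := by
        have := norm_sub_norm_le (φ x) (ψ x)
        rw [h1] at this
        linarith [h2, this]
      have hψpos : 0 < ‖ψ x‖ := lt_of_lt_of_le h1ε hψlow
      have hprod : ‖ψ x‖ * ‖ψinv x‖ = 1 := by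
        rw [← norm_mul, h3, norm_one]
      have h4 : ‖ψinv x‖ = ‖ψ x‖⁻¹ := eq_inv_of_mul_eq_one_right hprod
      rw [h4]
      exact inv_anti₀ h1ε hψlow
    have hχbd : ∀ᵐ x ∂μ, ‖φ x * ψinv x‖ ≤ c + ε * c := by
      filter_upwards [hχ_ae] with x hx
      have hrw : φ x * ψinv x = (φ x * ψinv x - (c:ℂ)) + (c:ℂ) := by ring
      calc ‖φ x * ψinv x‖ = ‖(φ x * ψinv x - (c:ℂ)) + (c:ℂ)‖ := congrArg norm hrw
        _ ≤ ‖φ x * ψinv x - (c:ℂ)‖ + ‖((c:ℝ):ℂ)‖ := norm_add_le _ _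
        _ ≤ ε * c + c := by
            have : ‖((c:ℝ):ℂ)‖ = c := by
              rw [Complex.norm_real, Real.norm_eq_abs, abs_of_pos hcpos]
            rw [this]; linarith [hx]
        _ = c + ε * c := by ring
    -- surjectivity
    have hsurj : T.range = ⊤ := by
      haveI : CompleteSpace (T.range) := hanti.completeSpace_range_clm
      rw [← Submodule.orthogonal_eq_bot_iff]
      rw [Submodule.eq_bot_iff]
      intro g hg
      rw [Submodule.mem_orthogonal] at hg
      set gE : Lp ℂ 2 μ := (g : Lp ℂ 2 μ) with hgE
      have mψig : MemLp (fun x => ψinv x * (gE : X → ℂ) x) 2 μ :=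
        memLp_mul_bd hψinv.1 hψinv_ae gE
      set ψig := mψig.toLp _ with hψigdef
      have hψig_ae := mψig.coeFn_toLp
      have hψig_mem : ψig ∈ M := hψinvmult gE g.2 ψig hψig_ae
      set fM : ↥M := ⟨ψig, hψig_mem⟩ with hfMdef
      have mg' : MemLp (fun x => (φ x * ψinv x) * (gE : X → ℂ) x) 2 μ :=
        memLp_mul_bd (hφ.1.mul hψinv.1) hχbd gE
      set g' := mg'.toLp _ with hg'def
      have hg'_ae := mg'.coeFn_toLp
      have hg'comp : (g' : X → ℂ) =ᵐ[μ] fun x => φ x * ((fM : Lp ℂ 2 μ) : X → ℂ) x := by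
        filter_upwards [hg'_ae, hψig_ae] with x h1 h2
        rw [h1]
        have : ((fM : Lp ℂ 2 μ) : X → ℂ) x = (ψig : X → ℂ) x := rfl
        rw [this, h2]
        ring
      have horth := hT fM g' hg'comp gE g.2
      have hTg : (inner ℂ (↑(T fM) : Lp ℂ 2 μ) gE : ℂ) = 0 := by
        have hmem : T fM ∈ T.range := LinearMap.mem_range_self _ fM
        have := hg (T fM) hmem
        rw [Submodule.coe_inner] at this
        exact this
      have hzero : (inner ℂ g' gE : ℂ) = 0 := by
        rw [inner_sub_left, sub_eq_zero] at horth
        rw [horth, hTg]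
      -- decompose
      set d := g' - (c:ℂ) • gE with hddef
      have hd_ae : (d : X → ℂ) =ᵐ[μ] fun x => (φ x * ψinv x - (c:ℂ)) * (gE : X → ℂ) x := by
        filter_upwards [Lp.coeFn_sub g' ((c:ℂ) • gE), Lp.coeFn_smul (c:ℂ) gE, hg'_ae]
          with x h1 h2 h3
        rw [hddef] at *
        rw [h1, Pi.sub_apply, h3, h2, Pi.smul_apply]
        simp [smul_eq_mul]
        ring
      have hnd : ‖d‖ ≤ (ε * c) * ‖gE‖ :=
        norm_le_of_ae_bd (by positivity) hχ_ae gE d hd_ae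
      have hg'eq : g' = (c:ℂ) • gE + d := by rw [hddef]; abel
      have hre : (inner ℂ g' gE : ℂ).re = c * ‖gE‖^2 + (inner ℂ d gE : ℂ).re := by
        rw [hg'eq, inner_add_left, inner_smul_left]
        have h6 : (inner ℂ gE gE : ℂ) = (‖gE‖ : ℂ)^2 := inner_self_eq_norm_sq_to_K gE
        rw [h6, Complex.add_re]
        congr 1
        rw [← Complex.ofReal_pow, Complex.conj_ofReal, ← Complex.ofReal_mul, Complex.ofReal_re]
      have hdre : |(inner ℂ d gE : ℂ).re| ≤ (ε * c) * ‖gE‖ * ‖gE‖ := by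
        refine (Complex.abs_re_le_norm _).trans ?_
        refine (norm_inner_le_norm _ _).trans ?_
        exact mul_le_mul_of_nonneg_right hnd (norm_nonneg _)
      have hgnorm : ‖gE‖ = 0 := by
        by_contra hne
        have hpos : 0 < ‖gE‖ := lt_of_le_of_ne (norm_nonneg _) (Ne.symm hne)
        have hm : 0 < ‖gE‖ * ‖gE‖ := mul_pos hpos hpos
        have h0 : (inner ℂ g' gE : ℂ).re = 0 := by rw [hzero]; rfl
        rw [hre, pow_two] at h0
        have h1' := (abs_le.mp hdre).1
        nlinarith [mul_pos hcpos hm, mul_pos (sub_pos.mpr hε1) (mul_pos hcpos hm)]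
      have : gE = 0 := norm_eq_zero.mp hgnorm
      exact Subtype.ext this
    have hker : T.ker = ⊥ := by
      rw [LinearMap.ker_eq_bot]; exact hanti.injective
    exact exists_inverse_of_bij hker hsurj
end
end

section
/- Let 0 < c ≤ C < ∞. There is a constant K, depending only on c and C, with the following property. Let (X, m) be a measure space, H a closed subspace of L²(m), and w₁, w₂ : X → ℝ measurable weights with c ≤ wᵢ ≤ C almost everywhere (i = 1, 2). Let f ∈ L²(m) and suppose g₁, g₂ ∈ H satisfy, for i = 1, 2 and all h ∈ H, ∫_X (f − gᵢ)·conj(h)·wᵢ dm = 0 (i.e. gᵢ is the orthogonal projection of f onto H with respect to the wᵢ-weighted inner product). Then ∫_X |g₁ − g₂|² dm ≤ K · ‖w₁ − w₂‖_{L^∞} · ∫_X |f|² dm. -/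
open MeasureTheory Complex
open scoped ENNReal ComplexConjugate

universe u

namespace WeightedProj

variable {X : Type u} [MeasurableSpace X] {m : Measure X}

lemma memLp_conj {ψ : X → ℂ} (h : MemLp ψ 2 m) :
    MemLp (fun x => conj (ψ x)) 2 m :=
  h.of_le (RCLike.continuous_conj.comp_aestronglyMeasurable h.aestronglyMeasurable) (Filter.Eventually.of_forall fun x => by simp)

lemma integrable_mul_conj {φ ψ : X → ℂ} (hφ : MemLp φ 2 m) (hψ : MemLp ψ 2 m) :
    Integrable (fun x => φ x * conj (ψ x)) m := by
  rw [← memLp_one_iff_integrable]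
  exact (memLp_conj hψ).smul (r := 1) hφ

lemma integrable_mul_conj_mul {φ ψ : X → ℂ} (hφ : MemLp φ 2 m) (hψ : MemLp ψ 2 m)
    {w : X → ℝ} (hw : AEStronglyMeasurable w m) {B : ℝ} (hB : ∀ᵐ x ∂m, |w x| ≤ B) :
    Integrable (fun x => φ x * conj (ψ x) * (w x : ℂ)) m := by
  have h1 := integrable_mul_conj hφ hψ
  have h2 : Integrable (fun x => (w x : ℂ) * (φ x * conj (ψ x))) m := by
    refine h1.bdd_mul (c := B) (Complex.continuous_ofReal.comp_aestronglyMeasurable hw) ?_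
    filter_upwards [hB] with x hx
    simpa using hx
  exact h2.congr (Filter.Eventually.of_forall fun x => by ring)


lemma integrable_normSq {φ ψ : X → ℂ} (hφ : MemLp φ 2 m) (hψ : MemLp ψ 2 m) :
    Integrable (fun x => ‖φ x‖ * ‖ψ x‖) m := by
  have := (integrable_mul_conj hφ hψ).norm
  refine this.congr (Filter.Eventually.of_forall fun x => ?_)
  simp [norm_mul]

lemma int_norm_sq (u : Lp ℂ 2 m) : ∫ x, ‖(u : X → ℂ) x‖ ^ 2 ∂m = ‖u‖ ^ 2 := by
  have h1 : ‖u‖ ^ 2 = RCLike.re (inner ℂ u u : ℂ) := (inner_self_eq_norm_sq u).symm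
  rw [h1, L2.inner_def]
  rw [← integral_re (L2.integrable_inner u u)]
  refine integral_congr_ae (Filter.Eventually.of_forall fun x => ?_)
  exact (inner_self_eq_norm_sq (𝕜 := ℂ) ((u : X → ℂ) x)).symm

lemma cauchy_schwarz {φ ψ : X → ℂ} (hφ : MemLp φ 2 m) (hψ : MemLp ψ 2 m) :
    ∫ x, ‖φ x‖ * ‖ψ x‖ ∂m ≤
      Real.sqrt (∫ x, ‖φ x‖ ^ 2 ∂m) * Real.sqrt (∫ x, ‖ψ x‖ ^ 2 ∂m) := by
  have hpq : (2 : ℝ).HolderConjugate 2 := by rw [Real.holderConjugate_iff]; norm_num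
  have h2 : ENNReal.ofReal (2:ℝ) = 2 := by norm_num
  have := integral_mul_norm_le_Lp_mul_Lq (μ := m) hpq (h2 ▸ hφ) (h2 ▸ hψ)
  calc ∫ x, ‖φ x‖ * ‖ψ x‖ ∂m
      ≤ (∫ x, ‖φ x‖ ^ (2:ℝ) ∂m) ^ (1/(2:ℝ)) * (∫ x, ‖ψ x‖ ^ (2:ℝ) ∂m) ^ (1/(2:ℝ)) := this
    _ = Real.sqrt (∫ x, ‖φ x‖ ^ 2 ∂m) * Real.sqrt (∫ x, ‖ψ x‖ ^ 2 ∂m) := by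
        rw [← Real.sqrt_eq_rpow, ← Real.sqrt_eq_rpow]
        norm_num [Real.rpow_natCast]


lemma integrable_sq {φ : X → ℂ} (hφ : MemLp φ 2 m) :
    Integrable (fun x => ‖φ x‖ ^ 2) m :=
  (integrable_normSq hφ hφ).congr (Filter.Eventually.of_forall fun x => (sq (‖φ x‖)).symm)

lemma integrable_sq_mul {φ : X → ℂ} (hφ : MemLp φ 2 m) {w : X → ℝ}
    (hw : AEStronglyMeasurable w m) {B : ℝ} (hB : ∀ᵐ x ∂m, |w x| ≤ B) :
    Integrable (fun x => ‖φ x‖ ^ 2 * w x) m := by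
  have h2 : Integrable (fun x => w x * ‖φ x‖ ^ 2) m := by
    refine (integrable_sq hφ).bdd_mul (c := B) hw ?_
    filter_upwards [hB] with x hx
    simpa [Real.norm_eq_abs] using hx
  exact h2.congr (Filter.Eventually.of_forall fun x => by ring)

lemma weight_self_eq (G : X → ℂ) (w : X → ℝ) :
    ∫ x, G x * conj (G x) * (w x : ℂ) ∂m = ((∫ x, ‖G x‖ ^ 2 * w x ∂m : ℝ) : ℂ) := by
  have h1 : ∫ x, G x * conj (G x) * (w x : ℂ) ∂m = ∫ x, ((‖G x‖ ^ 2 * w x : ℝ) : ℂ) ∂m := by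
    refine integral_congr_ae (Filter.Eventually.of_forall fun x => ?_)
    show G x * conj (G x) * (w x : ℂ) = ((‖G x‖ ^ 2 * w x : ℝ) : ℂ)
    rw [Complex.mul_conj, Complex.normSq_eq_norm_sq]
    push_cast
    ring
  rw [h1]
  exact integral_ofReal

lemma proj_bound {c C : ℝ} (hc : 0 < c) (hC : 0 ≤ C) (f g : Lp ℂ 2 m) {w : X → ℝ}
    (hw : Measurable w) (hwb : ∀ᵐ x ∂m, c ≤ w x ∧ w x ≤ C)
    (horth : ∫ x, ((f : X → ℂ) x - (g : X → ℂ) x) * conj ((g : X → ℂ) x) * (w x : ℂ) ∂m = 0) :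
    c * ‖g‖ ^ 2 ≤ C * (‖f‖ * ‖g‖) := by
  have hF := Lp.memLp f
  have hG := Lp.memLp g
  have hwC : ∀ᵐ x ∂m, |w x| ≤ C := by
    filter_upwards [hwb] with x hx
    exact abs_le.mpr ⟨by linarith [hx.1, hx.2], hx.2⟩
  have I1 : Integrable (fun x => (f : X → ℂ) x * conj ((g : X → ℂ) x) * (w x : ℂ)) m :=
    integrable_mul_conj_mul hF hG hw.aestronglyMeasurable hwC
  have I2 : Integrable (fun x => (g : X → ℂ) x * conj ((g : X → ℂ) x) * (w x : ℂ)) m :=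
    integrable_mul_conj_mul hG hG hw.aestronglyMeasurable hwC
  have hsplit : ∫ x, ((f : X → ℂ) x - (g : X → ℂ) x) * conj ((g : X → ℂ) x) * (w x : ℂ) ∂m
      = (∫ x, (f : X → ℂ) x * conj ((g : X → ℂ) x) * (w x : ℂ) ∂m)
        - ∫ x, (g : X → ℂ) x * conj ((g : X → ℂ) x) * (w x : ℂ) ∂m := by
    rw [← integral_sub I1 I2]
    exact integral_congr_ae (Filter.Eventually.of_forall fun x => by ring)
  have key : ∫ x, (g : X → ℂ) x * conj ((g : X → ℂ) x) * (w x : ℂ) ∂m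
      = ∫ x, (f : X → ℂ) x * conj ((g : X → ℂ) x) * (w x : ℂ) ∂m := by
    have := horth
    rw [hsplit] at this
    linear_combination -this
  set s : ℝ := ∫ x, ‖(g : X → ℂ) x‖ ^ 2 * w x ∂m with hs
  have hseq : ∫ x, (g : X → ℂ) x * conj ((g : X → ℂ) x) * (w x : ℂ) ∂m = (s : ℂ) :=
    weight_self_eq _ _
  have hs0 : 0 ≤ s := by
    refine integral_nonneg_of_ae ?_
    filter_upwards [hwb] with x hx
    exact mul_nonneg (sq_nonneg _) (by linarith [hx.1])
  have hlow : c * ‖g‖ ^ 2 ≤ s := by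
    rw [← int_norm_sq g, ← integral_const_mul]
    refine integral_mono_ae ((integrable_sq hG).const_mul c)
      (integrable_sq_mul hG hw.aestronglyMeasurable hwC) ?_
    filter_upwards [hwb] with x hx
    have := sq_nonneg ‖(g : X → ℂ) x‖
    nlinarith [hx.1]
  have hup : s ≤ C * (‖f‖ * ‖g‖) := by
    have h1 : s = ‖(s : ℂ)‖ := by
      rw [Complex.norm_real, Real.norm_eq_abs, _root_.abs_of_nonneg hs0]
    rw [h1, ← hseq, key]
    calc ‖∫ x, (f : X → ℂ) x * conj ((g : X → ℂ) x) * (w x : ℂ) ∂m‖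
        ≤ ∫ x, ‖(f : X → ℂ) x * conj ((g : X → ℂ) x) * (w x : ℂ)‖ ∂m :=
          norm_integral_le_integral_norm _
      _ ≤ ∫ x, C * (‖(f : X → ℂ) x‖ * ‖(g : X → ℂ) x‖) ∂m := by
          refine integral_mono_ae I1.norm ((integrable_normSq hF hG).const_mul C) ?_
          filter_upwards [hwC, hwb] with x hx hx2
          have h0 : 0 ≤ ‖(f : X → ℂ) x‖ * ‖(g : X → ℂ) x‖ :=
            mul_nonneg (norm_nonneg _) (norm_nonneg _)
          calc ‖(f : X → ℂ) x * conj ((g : X → ℂ) x) * (w x : ℂ)‖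
              = ‖(f : X → ℂ) x‖ * ‖(g : X → ℂ) x‖ * |w x| := by
                simp [norm_mul, Complex.norm_real, Real.norm_eq_abs]
            _ ≤ ‖(f : X → ℂ) x‖ * ‖(g : X → ℂ) x‖ * C := by
                exact mul_le_mul_of_nonneg_left hx h0
            _ = C * (‖(f : X → ℂ) x‖ * ‖(g : X → ℂ) x‖) := by ring
      _ = C * ∫ x, ‖(f : X → ℂ) x‖ * ‖(g : X → ℂ) x‖ ∂m := integral_const_mul _ _
      _ ≤ C * (Real.sqrt (∫ x, ‖(f : X → ℂ) x‖ ^ 2 ∂m) * Real.sqrt (∫ x, ‖(g : X → ℂ) x‖ ^ 2 ∂m)) := by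
          exact mul_le_mul_of_nonneg_left (cauchy_schwarz hF hG) hC
      _ = C * (‖f‖ * ‖g‖) := by
          rw [int_norm_sq f, int_norm_sq g, Real.sqrt_sq (norm_nonneg _), Real.sqrt_sq (norm_nonneg _)]
  linarith

end WeightedProj

open WeightedProj

/-- **Weighted projections depend Lipschitz-continuously on the weight.**  For
`0 < c ≤ C < ∞` there is a constant `K = K(c, C)` such that: for any measure space
`(X, m)`, any closed subspace `H` of `L²(m)`, any measurable weights `w₁, w₂` with
`c ≤ wᵢ ≤ C` a.e., any `f ∈ L²(m)`, and any `g₁, g₂ ∈ H` which are the orthogonal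
projections of `f` onto `H` with respect to the `w₁`- resp. `w₂`-weighted inner products
(characterized by `∫ (f - gᵢ)·conj(h)·wᵢ dm = 0` for all `h ∈ H`), one has
`∫ |g₁ - g₂|² dm ≤ K ‖w₁ - w₂‖_{L^∞} ∫ |f|² dm`. -/
theorem weighted_projection_perturbation (c C : ℝ) (hc : 0 < c) (hcC : c ≤ C) :
    ∃ K : ℝ, ∀ (X : Type u) (_ : MeasurableSpace X) (m : Measure X)
      (H : Submodule ℂ (Lp ℂ 2 m)), IsClosed (H : Set (Lp ℂ 2 m)) →
      ∀ w₁ w₂ : X → ℝ, Measurable w₁ → Measurable w₂ →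
      (∀ᵐ x ∂m, c ≤ w₁ x ∧ w₁ x ≤ C) → (∀ᵐ x ∂m, c ≤ w₂ x ∧ w₂ x ≤ C) →
      ∀ f g₁ g₂ : Lp ℂ 2 m, g₁ ∈ H → g₂ ∈ H →
      (∀ h ∈ H, ∫ x, ((f : X → ℂ) x - (g₁ : X → ℂ) x) * conj ((h : X → ℂ) x) * (w₁ x : ℂ) ∂m = 0) →
      (∀ h ∈ H, ∫ x, ((f : X → ℂ) x - (g₂ : X → ℂ) x) * conj ((h : X → ℂ) x) * (w₂ x : ℂ) ∂m = 0) →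
      ∫ x, ‖(g₁ : X → ℂ) x - (g₂ : X → ℂ) x‖ ^ 2 ∂m ≤
        K * (eLpNorm (w₁ - w₂) ⊤ m).toReal * ∫ x, ‖(f : X → ℂ) x‖ ^ 2 ∂m := by
  refine ⟨2 * (C / c) * (1 + C / c) / c, ?_⟩
  intro X inst m H _hH w₁ w₂ hw₁m hw₂m hw₁b hw₂b f g₁ g₂ hg₁ hg₂ hp₁ hp₂
  have hC0 : (0:ℝ) ≤ C := le_trans hc.le hcC
  set R : ℝ := C / c with hRdef
  have hR0 : 0 ≤ R := div_nonneg hC0 hc.le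
  have hF := Lp.memLp f
  have hG₁ := Lp.memLp g₁
  have hG₂ := Lp.memLp g₂
  set D : X → ℂ := fun x => (g₁ : X → ℂ) x - (g₂ : X → ℂ) x with hDdef
  have hD2 : MemLp D 2 m := hG₁.sub hG₂
  have hFG2 : MemLp (fun x => (f : X → ℂ) x - (g₂ : X → ℂ) x) 2 m := hF.sub hG₂
  have hFG1 : MemLp (fun x => (f : X → ℂ) x - (g₁ : X → ℂ) x) 2 m := hF.sub hG₁
  set ε : ℝ := (eLpNorm (w₁ - w₂) ⊤ m).toReal with hεdef
  have hε0 : 0 ≤ ε := ENNReal.toReal_nonneg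
  have hne : eLpNormEssSup (w₁ - w₂) m ≠ ⊤ := by
    refine (eLpNormEssSup_lt_top_of_ae_bound (C := C - c) ?_).ne
    filter_upwards [hw₁b, hw₂b] with x h1 h2
    rw [Pi.sub_apply, Real.norm_eq_abs]
    exact abs_le.mpr ⟨by linarith [h1.1, h2.2], by linarith [h1.2, h2.1]⟩
  have hεae : ∀ᵐ x ∂m, |w₁ x - w₂ x| ≤ ε := by
    filter_upwards [ae_le_eLpNormEssSup (f := w₁ - w₂) (μ := m)] with x hx
    have h2 := ENNReal.toReal_mono hne hx
    simpa [hεdef, eLpNorm_exponent_top, Real.norm_eq_abs] using h2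
  have hw₁C : ∀ᵐ x ∂m, |w₁ x| ≤ C := by
    filter_upwards [hw₁b] with x hx
    exact abs_le.mpr ⟨by linarith [hx.1, hx.2], hx.2⟩
  have hw₂C : ∀ᵐ x ∂m, |w₂ x| ≤ C := by
    filter_upwards [hw₂b] with x hx
    exact abs_le.mpr ⟨by linarith [hx.1, hx.2], hx.2⟩
  have hdH : g₁ - g₂ ∈ H := Submodule.sub_mem H hg₁ hg₂
  have hDae : ((g₁ - g₂ : Lp ℂ 2 m) : X → ℂ) =ᵐ[m] D := Lp.coeFn_sub g₁ g₂
  have hEae : ((f - g₂ : Lp ℂ 2 m) : X → ℂ) =ᵐ[m] fun x => (f : X → ℂ) x - (g₂ : X → ℂ) x :=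
    Lp.coeFn_sub f g₂
  -- orthogonality with test function D
  have e1 : ∫ x, ((f : X → ℂ) x - (g₁ : X → ℂ) x) * conj (D x) * (w₁ x : ℂ) ∂m = 0 := by
    refine Eq.trans (integral_congr_ae ?_) (hp₁ (g₁ - g₂) hdH)
    filter_upwards [hDae] with x hx
    rw [hx]
  have e2 : ∫ x, ((f : X → ℂ) x - (g₂ : X → ℂ) x) * conj (D x) * (w₂ x : ℂ) ∂m = 0 := by
    refine Eq.trans (integral_congr_ae ?_) (hp₂ (g₁ - g₂) hdH)
    filter_upwards [hDae] with x hx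
    rw [hx]
  -- integrability
  have I1 : Integrable (fun x => D x * conj (D x) * (w₁ x : ℂ)) m :=
    integrable_mul_conj_mul hD2 hD2 hw₁m.aestronglyMeasurable hw₁C
  have I2 : Integrable (fun x => ((f : X → ℂ) x - (g₂ : X → ℂ) x) * conj (D x) * (w₁ x : ℂ)) m :=
    integrable_mul_conj_mul hFG2 hD2 hw₁m.aestronglyMeasurable hw₁C
  have I3 : Integrable (fun x => ((f : X → ℂ) x - (g₂ : X → ℂ) x) * conj (D x) * (w₂ x : ℂ)) m :=
    integrable_mul_conj_mul hFG2 hD2 hw₂m.aestronglyMeasurable hw₂C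
  have I4 : Integrable (fun x => ((f : X → ℂ) x - (g₁ : X → ℂ) x) * conj (D x) * (w₁ x : ℂ)) m :=
    integrable_mul_conj_mul hFG1 hD2 hw₁m.aestronglyMeasurable hw₁C
  -- key identity
  have key1 : ∫ x, D x * conj (D x) * (w₁ x : ℂ) ∂m
      = ∫ x, ((f : X → ℂ) x - (g₂ : X → ℂ) x) * conj (D x) * (w₁ x : ℂ) ∂m := by
    have hsub := integral_sub I2 I4
    calc ∫ x, D x * conj (D x) * (w₁ x : ℂ) ∂m
        = ∫ x, (((f : X → ℂ) x - (g₂ : X → ℂ) x) * conj (D x) * (w₁ x : ℂ)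
            - ((f : X → ℂ) x - (g₁ : X → ℂ) x) * conj (D x) * (w₁ x : ℂ)) ∂m := by
          refine integral_congr_ae (Filter.Eventually.of_forall fun x => ?_)
          simp only [hDdef]
          ring
      _ = _ - _ := hsub
      _ = ∫ x, ((f : X → ℂ) x - (g₂ : X → ℂ) x) * conj (D x) * (w₁ x : ℂ) ∂m := by
          rw [e1, sub_zero]
  have key2 : ∫ x, ((f : X → ℂ) x - (g₂ : X → ℂ) x) * conj (D x) * ((w₁ x - w₂ x : ℝ) : ℂ) ∂m
      = ∫ x, ((f : X → ℂ) x - (g₂ : X → ℂ) x) * conj (D x) * (w₁ x : ℂ) ∂m := by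
    have hsub := integral_sub I2 I3
    calc ∫ x, ((f : X → ℂ) x - (g₂ : X → ℂ) x) * conj (D x) * ((w₁ x - w₂ x : ℝ) : ℂ) ∂m
        = ∫ x, (((f : X → ℂ) x - (g₂ : X → ℂ) x) * conj (D x) * (w₁ x : ℂ)
            - ((f : X → ℂ) x - (g₂ : X → ℂ) x) * conj (D x) * (w₂ x : ℂ)) ∂m := by
          refine integral_congr_ae (Filter.Eventually.of_forall fun x => ?_)
          push_cast
          ring
      _ = _ - _ := hsub
      _ = _ := by rw [e2, sub_zero]
  have keyT : ∫ x, D x * conj (D x) * (w₁ x : ℂ) ∂m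
      = ∫ x, ((f : X → ℂ) x - (g₂ : X → ℂ) x) * conj (D x) * ((w₁ x - w₂ x : ℝ) : ℂ) ∂m :=
    key1.trans key2.symm
  -- lower bound via s
  set s : ℝ := ∫ x, ‖D x‖ ^ 2 * w₁ x ∂m with hsdef
  have hseq : ∫ x, D x * conj (D x) * (w₁ x : ℂ) ∂m = (s : ℂ) := weight_self_eq D w₁
  have hs0 : 0 ≤ s := by
    refine integral_nonneg_of_ae ?_
    filter_upwards [hw₁b] with x hx
    exact mul_nonneg (sq_nonneg _) (by linarith [hx.1])
  have hDsq : ∫ x, ‖D x‖ ^ 2 ∂m = ‖g₁ - g₂‖ ^ 2 := by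
    rw [← int_norm_sq (g₁ - g₂)]
    refine integral_congr_ae ?_
    filter_upwards [hDae] with x hx
    rw [hx]
  have hEsq : ∫ x, ‖(f : X → ℂ) x - (g₂ : X → ℂ) x‖ ^ 2 ∂m = ‖f - g₂‖ ^ 2 := by
    rw [← int_norm_sq (f - g₂)]
    refine integral_congr_ae ?_
    filter_upwards [hEae] with x hx
    rw [hx]
  have hlow : c * ‖g₁ - g₂‖ ^ 2 ≤ s := by
    rw [← hDsq, ← integral_const_mul]
    refine integral_mono_ae ((integrable_sq hD2).const_mul c)
      (integrable_sq_mul hD2 hw₁m.aestronglyMeasurable hw₁C) ?_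
    filter_upwards [hw₁b] with x hx
    nlinarith [sq_nonneg ‖D x‖, hx.1]
  -- upper bound on s
  have hup : s ≤ ε * (‖f - g₂‖ * ‖g₁ - g₂‖) := by
    have h1 : s = ‖(s : ℂ)‖ := by
      rw [Complex.norm_real, Real.norm_eq_abs, _root_.abs_of_nonneg hs0]
    rw [h1, ← hseq, keyT]
    calc ‖∫ x, ((f : X → ℂ) x - (g₂ : X → ℂ) x) * conj (D x) * ((w₁ x - w₂ x : ℝ) : ℂ) ∂m‖
        ≤ ∫ x, ‖((f : X → ℂ) x - (g₂ : X → ℂ) x) * conj (D x) * ((w₁ x - w₂ x : ℝ) : ℂ)‖ ∂m :=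
          norm_integral_le_integral_norm _
      _ ≤ ∫ x, ε * (‖(f : X → ℂ) x - (g₂ : X → ℂ) x‖ * ‖D x‖) ∂m := by
          refine integral_mono_ae ?_ ((integrable_normSq hFG2 hD2).const_mul ε) ?_
          · have := integrable_mul_conj_mul hFG2 hD2
              (hw₁m.sub hw₂m).aestronglyMeasurable hεae
            exact this.norm
          · filter_upwards [hεae] with x hx
            have h0 : 0 ≤ ‖(f : X → ℂ) x - (g₂ : X → ℂ) x‖ * ‖D x‖ :=
              mul_nonneg (norm_nonneg _) (norm_nonneg _)
            calc ‖((f : X → ℂ) x - (g₂ : X → ℂ) x) * conj (D x) * ((w₁ x - w₂ x : ℝ) : ℂ)‖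
                = ‖(f : X → ℂ) x - (g₂ : X → ℂ) x‖ * ‖D x‖ * |w₁ x - w₂ x| := by
                  simp only [norm_mul, Complex.norm_real, Real.norm_eq_abs, RCLike.norm_conj]
              _ ≤ ‖(f : X → ℂ) x - (g₂ : X → ℂ) x‖ * ‖D x‖ * ε :=
                  mul_le_mul_of_nonneg_left hx h0
              _ = ε * (‖(f : X → ℂ) x - (g₂ : X → ℂ) x‖ * ‖D x‖) := by ring
      _ = ε * ∫ x, ‖(f : X → ℂ) x - (g₂ : X → ℂ) x‖ * ‖D x‖ ∂m := integral_const_mul _ _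
      _ ≤ ε * (Real.sqrt (∫ x, ‖(f : X → ℂ) x - (g₂ : X → ℂ) x‖ ^ 2 ∂m)
            * Real.sqrt (∫ x, ‖D x‖ ^ 2 ∂m)) :=
          mul_le_mul_of_nonneg_left (cauchy_schwarz hFG2 hD2) hε0
      _ = ε * (‖f - g₂‖ * ‖g₁ - g₂‖) := by
          rw [hEsq, hDsq, Real.sqrt_sq (norm_nonneg _), Real.sqrt_sq (norm_nonneg _)]
  -- norm bounds for g₁, g₂
  have hb : ∀ (g : Lp ℂ 2 m) (w : X → ℝ), Measurable w → (∀ᵐ x ∂m, c ≤ w x ∧ w x ≤ C) →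
      (∫ x, ((f : X → ℂ) x - (g : X → ℂ) x) * conj ((g : X → ℂ) x) * (w x : ℂ) ∂m = 0) →
      ‖g‖ ≤ R * ‖f‖ := by
    intro g w hw hwb horth
    have h := proj_bound hc hC0 f g hw hwb horth
    rcases eq_or_lt_of_le (norm_nonneg g) with h0 | h0
    · rw [← h0]
      positivity
    · have h2 : c * ‖g‖ ≤ C * ‖f‖ := by
        have := mul_le_mul_of_nonneg_right h (le_of_lt (inv_pos.mpr h0))
        calc c * ‖g‖ = c * ‖g‖ ^ 2 * (‖g‖)⁻¹ := by field_simp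
          _ ≤ C * (‖f‖ * ‖g‖) * (‖g‖)⁻¹ := this
          _ = C * ‖f‖ := by field_simp
      rw [hRdef, div_mul_eq_mul_div, le_div_iff₀ hc]
      linarith
  have hb₁ : ‖g₁‖ ≤ R * ‖f‖ := hb g₁ w₁ hw₁m hw₁b (hp₁ g₁ hg₁)
  have hb₂ : ‖g₂‖ ≤ R * ‖f‖ := hb g₂ w₂ hw₂m hw₂b (hp₂ g₂ hg₂)
  have hd_le : ‖g₁ - g₂‖ ≤ 2 * R * ‖f‖ := by
    calc ‖g₁ - g₂‖ ≤ ‖g₁‖ + ‖g₂‖ := norm_sub_le _ _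
      _ ≤ 2 * R * ‖f‖ := by linarith
  have he_le : ‖f - g₂‖ ≤ (1 + R) * ‖f‖ := by
    calc ‖f - g₂‖ ≤ ‖f‖ + ‖g₂‖ := norm_sub_le _ _
      _ ≤ (1 + R) * ‖f‖ := by linarith
  -- combine
  have hprod : ‖f - g₂‖ * ‖g₁ - g₂‖ ≤ ((1 + R) * ‖f‖) * (2 * R * ‖f‖) :=
    mul_le_mul he_le hd_le (norm_nonneg _) (by positivity)
  have hfinal : c * ‖g₁ - g₂‖ ^ 2 ≤ ε * (((1 + R) * ‖f‖) * (2 * R * ‖f‖)) :=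
    le_trans hlow (le_trans hup (mul_le_mul_of_nonneg_left hprod hε0))
  -- rewrite goal
  have gLHS : ∫ x, ‖(g₁ : X → ℂ) x - (g₂ : X → ℂ) x‖ ^ 2 ∂m = ‖g₁ - g₂‖ ^ 2 :=
    hDsq
  have gRHS : ∫ x, ‖(f : X → ℂ) x‖ ^ 2 ∂m = ‖f‖ ^ 2 :=
    int_norm_sq f
  rw [gLHS, gRHS]
  have h2 : ‖g₁ - g₂‖ ^ 2 ≤ (ε * (((1 + R) * ‖f‖) * (2 * R * ‖f‖))) / c :=
    (le_div_iff₀' hc).mpr hfinal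
  calc ‖g₁ - g₂‖ ^ 2 ≤ (ε * (((1 + R) * ‖f‖) * (2 * R * ‖f‖))) / c := h2
    _ = 2 * R * (1 + R) / c * ε * ‖f‖ ^ 2 := by ring
end
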